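/- Let Ω ⊆ ℂ be a domain whose complement contains at least two points and with nonempty boundary. Suppose there exist constants M > 1 and δ₀ ∈ (0,1) such that for every z ∈ Ω with δ_Ω(z) < δ₀ one has ρ_Ω(z) ≥ M / (δ_Ω(z)·log(1/δ_Ω(z))), i.e. every holomorphic f : 𝔻 → Ω with f(0) = z satisfies 2/|f′(0)| ≥ M/(δ_Ω(z)·log(1/δ_Ω(z))). Then there exists α > 1 such that ∂Ω satisfies condition (U)_{1,α}. -/

import Mathlib

open Metric Set

/-- A set `E ⊆ ℂ` satisfies condition `(U)_{1,α}`. -/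
def CondU1 (E : Set ℂ) (α : ℝ) : Prop :=
  ∃ C > (0 : ℝ), ∃ r₀ > (0 : ℝ), ∀ a ∈ E, ∀ r ∈ Set.Ioo (0 : ℝ) r₀,
    ({z : ℂ | C * r ^ α ≤ dist z a ∧ dist z a ≤ r} ∩ E).Nonempty

section AuxLemmas

open Complex

lemma mono_xlog {x y : ℝ} (hx : 0 < x) (hxy : x ≤ y) (hy : y ≤ Real.exp (-1)) :
    x * Real.log (1 / x) ≤ y * Real.log (1 / y) := by
  have hy0 : 0 < y := lt_of_lt_of_le hx hxy
  have h1 : Real.log (y / x) ≤ y / x - 1 := Real.log_le_sub_one_of_pos (by positivity)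
  have h2 : (1:ℝ) ≤ Real.log (1 / y) := by
    rw [Real.le_log_iff_exp_le (by positivity), one_div,
      le_inv_comm₀ (Real.exp_pos 1) hy0]
    calc y ≤ Real.exp (-1) := hy
    _ = (Real.exp 1)⁻¹ := by rw [← Real.exp_neg]
  have hlx : Real.log (1 / x) = Real.log (y / x) + Real.log (1 / y) := by
    rw [← Real.log_mul (by positivity) (by positivity)]
    congr 1
    field_simp
  rw [hlx]
  have h3 : x * Real.log (y / x) ≤ y - x := by
    calc x * Real.log (y / x) ≤ x * (y / x - 1) := by nlinarith
    _ = y - x := by field_simp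
  nlinarith


lemma annulus_preconnected (a : ℂ) (s r : ℝ) (hs : 0 ≤ s) :
    IsPreconnected {z : ℂ | s ≤ dist z a ∧ dist z a ≤ r} := by
  have himg : {z : ℂ | s ≤ dist z a ∧ dist z a ≤ r} =
      (fun q : ℝ × ℝ => a + (q.1 : ℂ) * Complex.exp (q.2 * Complex.I)) ''
        (Set.Icc s r ×ˢ Set.univ) := by
    ext z
    constructor
    · rintro ⟨h1, h2⟩
      refine ⟨(‖z - a‖, Complex.arg (z - a)), ⟨⟨?_, ?_⟩, trivial⟩, ?_⟩
      · simpa [Complex.dist_eq] using h1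
      · simpa [Complex.dist_eq] using h2
      · simp only
        rw [Complex.norm_mul_exp_arg_mul_I (z - a)]
        ring
    · rintro ⟨⟨x, y⟩, ⟨⟨hx1, hx2⟩, -⟩, rfl⟩
      have hx0 : 0 ≤ x := le_trans hs hx1
      have : dist (a + (x : ℂ) * Complex.exp (y * Complex.I)) a = x := by
        rw [Complex.dist_eq]
        simp [Complex.norm_exp, Complex.norm_of_nonneg hx0, hx0]
      exact ⟨by rw [this]; exact hx1, by rw [this]; exact hx2⟩
  rw [himg]
  exact (isPreconnected_Icc.prod isPreconnected_univ).image _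
    (by fun_prop)


lemma annulus_map (a : ℂ) (u m W : ℝ) (hu0 : 0 < u) (hu : u < Real.pi / 2) (hW : 0 < W) :
    ∃ F : ℂ → ℂ, DifferentiableOn ℂ F (ball (0 : ℂ) 1) ∧
      (∀ w ∈ ball (0 : ℂ) 1,
        Real.exp (m - W / 2) < dist (F w) a ∧ dist (F w) a < Real.exp (m + W / 2)) ∧
      F 0 = a + (Real.exp (m + W / Real.pi * u) : ℝ) ∧
      ‖deriv F 0‖ =
        Real.exp (m + W / Real.pi * u) * (2 * (W / Real.pi) * Real.cos u) := by
  have hπ : 0 < Real.pi := Real.pi_pos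
  have hcos : 0 < Real.cos u := Real.cos_pos_of_mem_Ioo ⟨by linarith, hu⟩
  set p : ℂ := Complex.exp ((u : ℂ) * Complex.I) with hp
  set k : ℂ := -((W / Real.pi : ℝ) : ℂ) * Complex.I with hk
  set G : ℂ → ℂ := fun w => (p + (starRingEnd ℂ) p * w) / (1 - w) with hG
  set F : ℂ → ℂ := fun w => a + Complex.exp ((m : ℂ) + k * Complex.log (G w)) with hF
  have hpre : p.re = Real.cos u := by simp [hp]
  have hpim : p.im = Real.sin u := by simp [hp]
  -- real part of G positive on the ball
  have hGre : ∀ w ∈ ball (0 : ℂ) 1, 0 < (G w).re := by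
    intro w hw
    have hw1 : ‖w‖ < 1 := by simpa [Complex.dist_eq] using mem_ball.1 hw
    have hns : Complex.normSq w < 1 := by
      rw [← Complex.sq_norm]; nlinarith [norm_nonneg w]
    have hden : (1 : ℂ) - w ≠ 0 := by
      intro h
      have : w = 1 := by linear_combination -h
      rw [this] at hw1; simp at hw1
    have hdns : 0 < Complex.normSq (1 - w) := by
      rwa [Complex.normSq_pos]
    have key : (p + (starRingEnd ℂ) p * w).re * (1 - w).re
        + (p + (starRingEnd ℂ) p * w).im * (1 - w).im
        = Real.cos u * (1 - Complex.normSq w) := by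
      simp [Complex.mul_re, Complex.mul_im, Complex.normSq_apply, hpre, hpim,
        Complex.conj_re, Complex.conj_im]
      ring
    rw [hG]
    simp only [Complex.div_re]
    rw [← add_div]
    rw [key]
    exact div_pos (by nlinarith) hdns
  have hG0 : G 0 = p := by simp [hG]
  have hlogp : Complex.log p = (u : ℂ) * Complex.I := by
    rw [hp, Complex.log_exp] <;> simp <;> linarith
  have hslit : ∀ w ∈ ball (0 : ℂ) 1, G w ∈ Complex.slitPlane := fun w hw =>
    Complex.mem_slitPlane_iff.2 (Or.inl (hGre w hw))
  -- differentiability on the ball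
  have hGdiff : ∀ w ∈ ball (0 : ℂ) 1, DifferentiableAt ℂ G w := by
    intro w hw
    have hw1 : ‖w‖ < 1 := by simpa [Complex.dist_eq] using mem_ball.1 hw
    have hden : (1 : ℂ) - w ≠ 0 := by
      intro h
      have : w = 1 := by linear_combination -h
      rw [this] at hw1; simp at hw1
    exact ((differentiableAt_const p).add ((differentiableAt_const _).mul
      differentiableAt_id)).div ((differentiableAt_const 1).sub differentiableAt_id) hden
  have hFdiff : DifferentiableOn ℂ F (ball (0 : ℂ) 1) := by
    intro w hw
    exact (((differentiableAt_const (m : ℂ)).add ((differentiableAt_const k).mul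
      ((Complex.differentiableAt_log (hslit w hw)).comp w (hGdiff w hw)))).cexp.const_add
        a).differentiableWithinAt
  -- modulus bounds
  have habs : ∀ w ∈ ball (0 : ℂ) 1,
      dist (F w) a = Real.exp (m + W / Real.pi * Complex.arg (G w)) := by
    intro w hw
    have : F w - a = Complex.exp ((m : ℂ) + k * Complex.log (G w)) := by
      rw [hF]; ring
    rw [Complex.dist_eq, this, Complex.norm_exp]
    congr 1
    have : ((m : ℂ) + k * Complex.log (G w)).re
        = m + (W / Real.pi) * (Complex.log (G w)).im := by
      simp [hk, Complex.mul_re]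
      try ring
    rw [this, Complex.log_im]
  have hargb : ∀ w ∈ ball (0 : ℂ) 1, |Complex.arg (G w)| < Real.pi / 2 := by
    intro w hw
    exact Complex.abs_arg_lt_pi_div_two_iff.2 (Or.inl (hGre w hw))
  have hbounds : ∀ w ∈ ball (0 : ℂ) 1,
      Real.exp (m - W / 2) < dist (F w) a ∧ dist (F w) a < Real.exp (m + W / 2) := by
    intro w hw
    rw [habs w hw]
    have h1 := abs_lt.1 (hargb w hw)
    have hl : W / Real.pi * Complex.arg (G w) < W / 2 := by
      have := (mul_lt_mul_iff_right₀ (by positivity : (0:ℝ) < W / Real.pi)).2 h1.2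
      calc W / Real.pi * Complex.arg (G w) < W / Real.pi * (Real.pi / 2) := this
      _ = W / 2 := by field_simp
    have hl2 : -(W / 2) < W / Real.pi * Complex.arg (G w) := by
      have := (mul_lt_mul_iff_right₀ (by positivity : (0:ℝ) < W / Real.pi)).2 h1.1
      calc -(W/2) = W / Real.pi * (-(Real.pi / 2)) := by field_simp
      _ < W / Real.pi * Complex.arg (G w) := this
    constructor
    · exact Real.exp_lt_exp.2 (by linarith)
    · exact Real.exp_lt_exp.2 (by linarith)
  -- value at zero
  have hexp0 : (m : ℂ) + k * Complex.log (G 0) = ((m + W / Real.pi * u : ℝ) : ℂ) := by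
    rw [hG0, hlogp, hk]
    push_cast
    have hI : Complex.I ^ 2 = -1 := Complex.I_sq
    linear_combination (-(W:ℂ) * ((Real.pi : ℂ))⁻¹ * (u:ℂ)) * hI
  have hF0 : F 0 = a + (Real.exp (m + W / Real.pi * u) : ℝ) := by
    rw [hF]
    simp only
    rw [hexp0, ← Complex.ofReal_exp]
  -- derivative at zero
  have hden0 : (1 : ℂ) - 0 ≠ 0 := by norm_num
  have h1 : HasDerivAt (fun w : ℂ => p + (starRingEnd ℂ) p * w) ((starRingEnd ℂ) p) 0 := by
    simpa using ((hasDerivAt_id (0:ℂ)).const_mul ((starRingEnd ℂ) p)).const_add p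
  have h2 : HasDerivAt (fun w : ℂ => (1 : ℂ) - w) (-1) 0 := by
    simpa using (hasDerivAt_id (0:ℂ)).const_sub (1:ℂ)
  have hG' : HasDerivAt G (p + (starRingEnd ℂ) p) 0 := by
    have := h1.div h2 hden0
    refine this.congr_deriv ?_
    simp
    ring
  have hlog' : HasDerivAt Complex.log p⁻¹ p :=
    Complex.hasDerivAt_log (Complex.mem_slitPlane_iff.2 (Or.inl (by rw [hpre]; exact hcos)))
  have hlogG : HasDerivAt (fun w => Complex.log (G w)) (p⁻¹ * (p + (starRingEnd ℂ) p)) 0 := by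
    have hlog'' : HasDerivAt Complex.log p⁻¹ (G 0) := by rw [hG0]; exact hlog'
    exact hlog''.comp 0 hG'
  have hinner : HasDerivAt (fun w => (m : ℂ) + k * Complex.log (G w))
      (k * (p⁻¹ * (p + (starRingEnd ℂ) p))) 0 := (hlogG.const_mul k).const_add (m : ℂ)
  have hF' : HasDerivAt F
      (Complex.exp ((m : ℂ) + k * Complex.log (G 0)) * (k * (p⁻¹ * (p + (starRingEnd ℂ) p)))) 0 :=
    (hinner.cexp).const_add a
  have hderiv : deriv F 0 = Complex.exp ((m : ℂ) + k * Complex.log (G 0))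
      * (k * (p⁻¹ * (p + (starRingEnd ℂ) p))) := hF'.deriv
  have habsp : ‖p‖ = 1 := by
    rw [hp]; simpa using Complex.norm_exp ((u:ℂ) * Complex.I)
  have habsd : ‖deriv F 0‖
      = Real.exp (m + W / Real.pi * u) * (2 * (W / Real.pi) * Real.cos u) := by
    have e1 : ‖Complex.exp ((m + W / Real.pi * u : ℝ) : ℂ)‖
        = Real.exp (m + W / Real.pi * u) := by rw [Complex.norm_exp]; simp
    have e2 : ‖k‖ = W / Real.pi := by
      rw [hk]
      rw [norm_mul, norm_neg, Complex.norm_real, Real.norm_eq_abs, Complex.norm_I,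
        abs_of_pos (div_pos hW hπ), mul_one]
    have e3 : p + (starRingEnd ℂ) p = ((2 * Real.cos u : ℝ) : ℂ) := by
      rw [Complex.add_conj, hpre]
    have e4 : ‖((2 * Real.cos u : ℝ) : ℂ)‖ = 2 * Real.cos u := by
      rw [Complex.norm_real, Real.norm_eq_abs, abs_of_pos (by linarith : (0:ℝ) < 2 * Real.cos u)]
    have e5 : ‖-((W / Real.pi : ℝ) : ℂ)‖ = W / Real.pi := by
      rw [norm_neg, Complex.norm_real, Real.norm_eq_abs, abs_of_pos (div_pos hW hπ)]
    rw [hderiv, hexp0, e3, hk]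
    simp only [norm_mul, norm_inv, habsp, e1, e4, e5, Complex.norm_I]
    ring
  exact ⟨F, hFdiff, hbounds, hF0, habsd⟩


end AuxLemmas

/-- If the Poincaré density satisfies `ρ_Ω(z) ≥ M/(δ_Ω(z) log(1/δ_Ω(z)))` near
the boundary for some `M > 1` (equivalently, every holomorphic `f : 𝔻 → Ω`
with `f 0 = z` has `|f′(0)| ≤ (2/M)·δ_Ω(z)·log(1/δ_Ω(z))`), then `∂Ω`
satisfies `(U)_{1,α}` for some `α > 1`. -/
theorem stmt_5 (Ω : Set ℂ) (hopen : IsOpen Ω) (hconn : IsConnected Ω)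
    (hbd : (frontier Ω).Nonempty)
    (htwo : ∃ p q : ℂ, p ∉ Ω ∧ q ∉ Ω ∧ p ≠ q)
    (M δ₀ : ℝ) (hM : 1 < M) (hδ₀ : δ₀ ∈ Set.Ioo (0 : ℝ) 1)
    (hρ : ∀ z ∈ Ω, infDist z (frontier Ω) < δ₀ →
      ∀ f : ℂ → ℂ, DifferentiableOn ℂ f (ball (0 : ℂ) 1) →
        MapsTo f (ball (0 : ℂ) 1) Ω → f 0 = z →
          ‖deriv f 0‖ ≤
            (2 / M) * infDist z (frontier Ω) * Real.log (1 / infDist z (frontier Ω))) :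
    ∃ α > (1 : ℝ), CondU1 (frontier Ω) α := by
  obtain ⟨hδ0, hδ1⟩ := hδ₀
  have hM0 : (0:ℝ) < M := by linarith
  have hπ : (0:ℝ) < Real.pi := Real.pi_pos
  have hπ2 : (2:ℝ) < Real.pi := by have := Real.pi_gt_three; linarith
  -- choose v with v < M sin v
  set v : ℝ := min 1 (Real.sqrt ((M - 1) / M)) with hv
  have hv0 : 0 < v := lt_min one_pos (Real.sqrt_pos.2 (div_pos (by linarith) hM0))
  have hv1 : v ≤ 1 := min_le_left _ _
  have hvsq : v ^ 2 ≤ (M - 1) / M := by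
    have h1 : v ≤ Real.sqrt ((M - 1) / M) := min_le_right _ _
    nlinarith [Real.sq_sqrt (le_of_lt (div_pos (show (0:ℝ) < M - 1 by linarith) hM0)),
      Real.sqrt_nonneg ((M - 1) / M), hv0]
  have hsin : v < M * Real.sin v := by
    have h1 := Real.sin_gt_sub_cube hv0
    have h2 : M * v ^ 2 ≤ M - 1 := by
      have := (le_div_iff₀ hM0).1 hvsq
      linarith
    nlinarith [mul_le_mul_of_nonneg_right h2 hv0.le, hv0, hM0]
  set u : ℝ := Real.pi / 2 - v with hu
  have hu0 : 0 < u := by rw [hu]; linarith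
  have huπ : u < Real.pi / 2 := by rw [hu]; linarith
  have hcosu : Real.cos u = Real.sin v := by rw [hu, Real.cos_pi_div_two_sub]
  set θ : ℝ := M * Real.cos u + u with hθ
  have hθπ : Real.pi / 2 < θ := by rw [hθ, hcosu, hu]; linarith
  set β : ℝ := (θ + Real.pi / 2) / (θ - Real.pi / 2) with hβ
  have hβ1 : β * (θ - Real.pi / 2) = θ + Real.pi / 2 := by
    have hne : θ - Real.pi / 2 ≠ 0 := ne_of_gt (by linarith)
    rw [hβ, div_mul_cancel₀ _ hne]
  have hβ0 : 0 < β := div_pos (by linarith) (by linarith)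
  refine ⟨β + 1, by linarith, ?_⟩
  set α : ℝ := β + 1 with hα
  -- constants
  obtain ⟨z₀, hz₀⟩ := hconn.nonempty
  have hz₀f : z₀ ∉ frontier Ω := by
    rw [hopen.frontier_eq]; exact fun h => h.2 hz₀
  have hd₀ : 0 < infDist z₀ (frontier Ω) :=
    (isClosed_frontier.notMem_iff_infDist_pos hbd).1 hz₀f
  set d₀ : ℝ := infDist z₀ (frontier Ω) with hd₀def
  set r₀ : ℝ := min δ₀ (min (Real.exp (-1)) d₀) with hr₀
  have hr₀0 : 0 < r₀ := lt_min hδ0 (lt_min (Real.exp_pos _) hd₀)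
  refine ⟨1, one_pos, r₀, hr₀0, ?_⟩
  rintro a ha r ⟨hr0, hrr₀⟩
  by_contra hcon
  rw [Set.not_nonempty_iff_eq_empty] at hcon
  have hre : r < Real.exp (-1) :=
    lt_of_lt_of_le hrr₀ (le_trans (min_le_right _ _) (min_le_left _ _))
  have hexp1 : Real.exp (-1 : ℝ) < 1 := by
    rw [← Real.exp_zero]; exact Real.exp_lt_exp.2 (by norm_num)
  have hr1 : r < 1 := lt_trans hre hexp1
  set s : ℝ := r ^ α with hs
  have hs0 : 0 < s := Real.rpow_pos_of_pos hr0 α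
  have hsr : s < r := by
    have h := Real.rpow_lt_rpow_of_exponent_gt hr0 hr1 (show (1:ℝ) < α by rw [hα]; linarith)
    rw [Real.rpow_one] at h
    rw [hs]; exact h
  have hlogs : Real.log s = α * Real.log r := by rw [hs]; exact Real.log_rpow hr0 α
  have hlr : Real.log r < 0 := Real.log_neg hr0 hr1
  set L : ℝ := -Real.log r with hL
  have hL0 : 0 < L := by rw [hL]; linarith
  set m : ℝ := (Real.log s + Real.log r) / 2 with hm
  set W : ℝ := Real.log r - Real.log s with hWdef
  have hW0 : 0 < W := by
    have := Real.log_lt_log hs0 hsr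
    rw [hWdef]; linarith
  have hems : Real.exp (m - W / 2) = s := by
    rw [show m - W / 2 = Real.log s by rw [hm, hWdef]; ring]
    exact Real.exp_log hs0
  have hemr : Real.exp (m + W / 2) = r := by
    rw [show m + W / 2 = Real.log r by rw [hm, hWdef]; ring]
    exact Real.exp_log hr0
  set Ann : Set ℂ := {z : ℂ | s ≤ dist z a ∧ dist z a ≤ r} with hAnn
  have hAnnf : ∀ z ∈ Ann, z ∉ frontier Ω := by
    intro z hz hzf
    have hmem : z ∈ ({z : ℂ | 1 * r ^ α ≤ dist z a ∧ dist z a ≤ r} ∩ frontier Ω) := by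
      refine ⟨⟨?_, hz.2⟩, hzf⟩
      rw [one_mul, ← hs]; exact hz.1
    rw [hcon] at hmem
    exact hmem
  have hAnnsub : Ann ⊆ Ω ∪ (closure Ω)ᶜ := by
    intro z hz
    by_cases hzc : z ∈ closure Ω
    · left
      by_contra hzΩ
      exact hAnnf z hz (by rw [hopen.frontier_eq]; exact ⟨hzc, hzΩ⟩)
    · right; exact hzc
  have hdisj : Disjoint Ω (closure Ω)ᶜ :=
    (disjoint_compl_right (α := Set ℂ)).mono_left subset_closure
  rcases (annulus_preconnected a s r hs0.le).subset_or_subset hopen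
      isClosed_closure.isOpen_compl hdisj hAnnsub with hsub | hsub
  · -- annulus inside Ω : analytic contradiction
    obtain ⟨F, hFdiff, hFb, hF0, hFd⟩ := annulus_map a u m W hu0 huπ hW0
    have hmaps : MapsTo F (ball 0 1) Ω := by
      intro w hw
      apply hsub
      obtain ⟨h1, h2⟩ := hFb w hw
      rw [hems] at h1; rw [hemr] at h2
      exact ⟨h1.le, h2.le⟩
    set t : ℝ := Real.exp (m + W / Real.pi * u) with ht
    have ht0 : 0 < t := Real.exp_pos _
    have hdistF0 : dist (F 0) a = t := by
      rw [hF0, Complex.dist_eq, add_sub_cancel_left, Complex.norm_real, Real.norm_eq_abs, abs_of_pos ht0]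
    have htr : t < r := by
      rw [← hemr, ht]
      apply Real.exp_lt_exp.2
      have h1 : W / Real.pi * u < W / Real.pi * (Real.pi / 2) :=
        mul_lt_mul_of_pos_left huπ (by positivity)
      have h2 : W / Real.pi * (Real.pi / 2) = W / 2 := by field_simp
      linarith
    have hzΩ : F 0 ∈ Ω := hmaps (mem_ball_self one_pos)
    set δ : ℝ := infDist (F 0) (frontier Ω) with hδdef
    have hδt : δ ≤ t := by
      rw [hδdef, ← hdistF0]; exact infDist_le_dist_of_mem ha
    have hδpos : 0 < δ := by
      rw [hδdef]
      refine (isClosed_frontier.notMem_iff_infDist_pos hbd).1 ?_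
      rw [hopen.frontier_eq]; exact fun h => h.2 hzΩ
    have hrδ₀ : r < δ₀ := lt_of_lt_of_le hrr₀ (min_le_left _ _)
    have happ := hρ (F 0) hzΩ (by rw [← hδdef]; linarith) F hFdiff hmaps rfl
    rw [hFd] at happ
    have hmono : δ * Real.log (1 / δ) ≤ t * Real.log (1 / t) :=
      mono_xlog hδpos hδt (le_of_lt (lt_trans htr hre))
    have key : t * (2 * (W / Real.pi) * Real.cos u) ≤ 2 / M * (t * Real.log (1 / t)) := by
      calc t * (2 * (W / Real.pi) * Real.cos u) ≤ 2 / M * δ * Real.log (1 / δ) := happ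
      _ = 2 / M * (δ * Real.log (1 / δ)) := by ring
      _ ≤ 2 / M * (t * Real.log (1 / t)) :=
          mul_le_mul_of_nonneg_left hmono (by positivity)
    have hlog1t : Real.log (1 / t) = -(m + W / Real.pi * u) := by
      rw [one_div, Real.log_inv, ht, Real.log_exp]
    rw [hlog1t] at key
    -- clear denominators
    have hcosu0 : 0 < Real.cos u := by rw [hcosu]; exact Real.sin_pos_of_pos_of_lt_pi hv0 (by linarith)
    have hq : M * (2 / M) = 2 := by field_simp
    have h1 : M * (t * (2 * (W / Real.pi) * Real.cos u))
        ≤ 2 * (t * -(m + W / Real.pi * u)) := by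
      calc M * (t * (2 * (W / Real.pi) * Real.cos u))
          ≤ M * (2 / M * (t * -(m + W / Real.pi * u))) :=
            mul_le_mul_of_nonneg_left key hM0.le
      _ = 2 * (t * -(m + W / Real.pi * u)) := by rw [← mul_assoc, hq]
    have h2 : M * (W / Real.pi * Real.cos u) ≤ -(m + W / Real.pi * u) := by
      have h2t : (0:ℝ) < 2 * t := by linarith
      rw [← mul_le_mul_iff_right₀ h2t]
      calc 2 * t * (M * (W / Real.pi * Real.cos u))
          = M * (t * (2 * (W / Real.pi) * Real.cos u)) := by ring
      _ ≤ 2 * (t * -(m + W / Real.pi * u)) := h1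
      _ = 2 * t * -(m + W / Real.pi * u) := by ring
    have hlp : W / Real.pi * Real.pi = W := div_mul_cancel₀ _ (ne_of_gt hπ)
    have hfinal : W * θ ≤ -(Real.pi * m) := by
      have h3 := mul_le_mul_of_nonneg_left h2 hπ.le
      have e1 : Real.pi * (M * (W / Real.pi * Real.cos u)) = M * Real.cos u * W := by
        rw [show Real.pi * (M * (W / Real.pi * Real.cos u))
            = M * Real.cos u * (W / Real.pi * Real.pi) by ring, hlp]
      have e2 : Real.pi * -(m + W / Real.pi * u) = -(Real.pi * m) - W * u := by
        rw [show Real.pi * -(m + W / Real.pi * u)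
            = -(Real.pi * m) - W / Real.pi * Real.pi * u by ring, hlp]
      rw [e1, e2] at h3
      rw [hθ]
      linarith
    have hWL : W = β * L := by
      rw [hWdef, hlogs, hL, hα]; ring
    have hmL : m = -((β + 2) * L) / 2 := by
      rw [hm, hlogs, hL, hα]; ring
    rw [hWL, hmL] at hfinal
    have hid : β * L * θ = Real.pi * (β + 2) * L / 2 + L * (θ - Real.pi / 2) := by
      linear_combination L * hβ1
    have hpos : (0:ℝ) < L * (θ - Real.pi / 2) := mul_pos hL0 (by linarith)
    clear_value v u θ β α d₀ r₀ s L m W δ t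
    linarith [hfinal, hid, hpos]
  · -- annulus outside closure Ω
    have hΩsub : Ω ⊆ ball a s ∪ {z : ℂ | r < dist z a} := by
      intro z hz
      by_contra hzc
      simp only [Set.mem_union, mem_ball, Set.mem_setOf_eq, not_or, not_lt] at hzc
      exact hsub ⟨hzc.1, hzc.2⟩ (subset_closure hz)
    have hopen2 : IsOpen {z : ℂ | r < dist z a} :=
      isOpen_lt continuous_const (continuous_id.dist continuous_const)
    have hdisj2 : Disjoint (ball a s) {z : ℂ | r < dist z a} := by
      rw [Set.disjoint_left]
      intro z hz1 hz2
      rw [mem_ball] at hz1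
      simp only [Set.mem_setOf_eq] at hz2
      linarith
    have hmem : (Ω ∩ ball a s).Nonempty := by
      have haclos : a ∈ closure Ω := frontier_subset_closure ha
      rw [_root_.mem_closure_iff] at haclos
      obtain ⟨z, hzo, hzΩ⟩ := haclos (ball a s) isOpen_ball (mem_ball_self hs0)
      exact ⟨z, hzΩ, hzo⟩
    rcases hconn.isPreconnected.subset_or_subset isOpen_ball hopen2 hdisj2 hΩsub with h | h
    · have h1 : dist z₀ a < s := by
        have := h hz₀; rwa [mem_ball] at this
      have h2 : d₀ ≤ dist z₀ a := infDist_le_dist_of_mem ha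
      have h3 : r₀ ≤ d₀ := le_trans (min_le_right _ _) (min_le_right _ _)
      linarith
    · obtain ⟨z, hzΩ, hzb⟩ := hmem
      have h4 := h hzΩ
      simp only [Set.mem_setOf_eq] at h4
      rw [mem_ball] at hzb
      linarith
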